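/- Let m ≥ 3 be an odd integer. Then the spectrum of the Farey graph G3(2m) equals, as a multiset, the product multiset sp3(2)·sp3(m) = {λ·μ : λ ∈ sp3(2), μ ∈ sp3(m)} counted with multiplicity, where sp3(2) = {2, −1, −1}. -/

import Mathlib

/-- The equivalence relation identifying `(a,c)` with `(-a,-c)` on the set of pairs of
elements of `ℤ/nℤ` generating the unit ideal. -/
def FareySetoid (n : ℕ) : Setoid {p : ZMod n × ZMod n // IsCoprime p.1 p.2} where
  r p q := p.1 = q.1 ∨ p.1 = -q.1
  iseqv := by
    constructor
    · intro p; exact Or.inl rfl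
    · rintro p q (h | h)
      · exact Or.inl h.symm
      · right; rw [h, neg_neg]
    · rintro p q s (h1 | h1) (h2 | h2)
      · exact Or.inl (h1.trans h2)
      · right; rw [h1, h2]
      · right; rw [h1, h2]
      · left; rw [h1, h2, neg_neg]

/-- The vertices of the Farey graph `G3(n)`: classes `[a:c]` of pairs `(a,c) ∈ (ℤ/nℤ)²`
generating the unit ideal, with `(a,c) ~ (-a,-c)`. -/
def FareyVertex (n : ℕ) := Quotient (FareySetoid n)

/-- The vertex `[a:c]` of the Farey graph. -/
def FareyVertex.mk (n : ℕ) (a c : ZMod n) (h : IsCoprime a c) : FareyVertex n :=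
  Quotient.mk (FareySetoid n) ⟨(a, c), h⟩

/-- The Farey graph `G3(n)`: vertices `[a:c]` and `[b:d]` are adjacent iff
`ad - bc ≡ ±1 (mod n)`. -/
def FareyGraph (n : ℕ) : SimpleGraph (FareyVertex n) where
  Adj u v := u ≠ v ∧ ∃ a c b d : ZMod n,
    (∃ h, u = FareyVertex.mk n a c h) ∧ (∃ h, v = FareyVertex.mk n b d h) ∧
    (a * d - b * c = 1 ∨ a * d - b * c = -1)
  symm := by
    constructor
    rintro u v ⟨hne, a, c, b, d, hu, hv, h⟩
    refine ⟨hne.symm, b, d, a, c, hv, hu, ?_⟩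
    rcases h with h | h
    · right; linear_combination -h
    · left; linear_combination -h
  loopless := ⟨fun u h => h.1 rfl⟩

instance (n : ℕ) [NeZero n] : Finite (FareyVertex n) := Quotient.finite _

/-- A pair of integers `b, d` with `gcd(b, d, n) = 1` yields a pair generating the unit
ideal of `ℤ/nℤ`. -/
lemma isCoprime_zmod_of_gcd {n : ℕ} {b d : ℤ} (h : Int.gcd b (Int.gcd d n) = 1) :
    IsCoprime (b : ZMod n) (d : ZMod n) := by
  obtain ⟨u, v, huv⟩ := Int.isCoprime_iff_gcd_eq_one.mpr h
  have hgcd : ((Int.gcd d n : ℕ) : ℤ) = d * Int.gcdA d n + n * Int.gcdB d n :=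
    Int.gcd_eq_gcd_ab d (n : ℤ)
  refine ⟨(u : ZMod n), ((v * Int.gcdA d (n : ℤ) : ℤ) : ZMod n), ?_⟩
  have huv' : u * b + (v * Int.gcdA d (n : ℤ)) * d + (v * Int.gcdB d (n : ℤ)) * n = 1 := by
    rw [← huv, hgcd]; ring
  have := congrArg (fun z : ℤ => (z : ZMod n)) huv'
  push_cast at this
  rw [ZMod.natCast_self] at this
  push_cast
  linear_combination this
/-- The vertex `[b:d]` of `G3(n)` determined by integers `b`, `d` with `gcd(b,d,n) = 1`. -/
def FareyVertex.ofInt (n : ℕ) (b d : ℤ) (h : Int.gcd b (Int.gcd d n) = 1) : FareyVertex n :=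
  FareyVertex.mk n (b : ZMod n) (d : ZMod n) (isCoprime_zmod_of_gcd h)

/-- The number of vertices of the Farey graph `G3(n)`. -/
noncomputable def fareyCard (n : ℕ) : ℕ := Nat.card (FareyVertex n)

/-- The characteristic polynomial of the (real) adjacency matrix of the Farey
graph `G3(n)` (junk value `1` for `n = 0`). -/
noncomputable def fareyCharpoly (n : ℕ) : Polynomial ℝ :=
  if h : n = 0 then 1
  else
    letI : NeZero n := ⟨h⟩
    letI : Fintype (FareyVertex n) := Fintype.ofFinite _
    letI : DecidableEq (FareyVertex n) := Classical.decEq _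
    letI : DecidableRel (FareyGraph n).Adj := Classical.decRel _
    Matrix.charpoly ((FareyGraph n).adjMatrix ℝ)

/-- The spectrum of the Farey graph `G3(n)`: the multiset of real roots, with
multiplicity, of the characteristic polynomial of its adjacency matrix. -/
noncomputable def sp3 (n : ℕ) : Multiset ℝ := (fareyCharpoly n).roots


open Polynomial Matrix Kronecker

section GenericCharpoly

variable {n : Type*} [Fintype n] [DecidableEq n]

lemma my_charpoly_conj {R : Type*} [CommRing R] (P Q A : Matrix n n R) (h1 : Q * P = 1) :
    (Q * A * P).charpoly = A.charpoly := by
  have hone : (Q.map C) * (P.map C) = 1 := by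
    rw [← Matrix.map_mul, h1, Matrix.map_one _ (map_zero C) (map_one C)]
  have hQ : (charmatrix (Q * A * P)) = (Q.map C) * charmatrix A * (P.map C) := by
    unfold charmatrix
    rw [Matrix.mul_sub, Matrix.sub_mul]
    congr 1
    · rw [← (Matrix.scalar_commute (X : R[X]) (Commute.all X) (Q.map C)).eq, Matrix.mul_assoc, hone,
        Matrix.mul_one]
    · simp [Matrix.map_mul, Matrix.mul_assoc]
  have hdet : (Q.map C).det * (P.map C).det = 1 := by
    rw [← det_mul, hone, det_one]
  rw [Matrix.charpoly, hQ, det_mul, det_mul, Matrix.charpoly]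
  calc ((Q.map C).det * (charmatrix A).det) * (P.map C).det
      = (charmatrix A).det * ((Q.map C).det * (P.map C).det) := by ring
    _ = (charmatrix A).det := by rw [hdet, mul_one]

lemma my_charpoly_diagonal {R : Type*} [CommRing R] (d : n → R) :
    (Matrix.diagonal d).charpoly = ∏ i, (X - C (d i)) := by
  have : charmatrix (Matrix.diagonal d) = Matrix.diagonal (fun i => X - C (d i)) := by
    ext i j
    by_cases h : i = j
    · subst h; simp [charmatrix_apply_eq]
    · simp [charmatrix_apply_ne _ _ _ h, Matrix.diagonal_apply_ne _ h]
  rw [Matrix.charpoly, this, det_diagonal]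

lemma my_charpoly_blockDiagonal {o : Type*} [Fintype o] [DecidableEq o] {R : Type*} [CommRing R]
    (f : o → Matrix n n R) :
    (Matrix.blockDiagonal f).charpoly = ∏ i, (f i).charpoly := by
  have : charmatrix (Matrix.blockDiagonal f) = Matrix.blockDiagonal (fun i => charmatrix (f i)) := by
    ext ⟨a, i⟩ ⟨b, j⟩
    by_cases h : (⟨a, i⟩ : n × o) = ⟨b, j⟩
    · obtain ⟨h1, h2⟩ := Prod.mk.injEq .. ▸ h
      subst h1; subst h2
      simp [charmatrix_apply_eq, Matrix.blockDiagonal_apply]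
    · rw [charmatrix_apply_ne _ _ _ h]
      by_cases hij : i = j
      · subst hij
        have hab : a ≠ b := fun hab => h (by rw [hab])
        simp [Matrix.blockDiagonal_apply, charmatrix_apply_ne _ _ _ hab]
      · simp [Matrix.blockDiagonal_apply, hij]
  rw [Matrix.charpoly, this, det_blockDiagonal]
  rfl

lemma charpoly_smul_hermitian (B : Matrix n n ℝ) (hB : B.IsHermitian) (c : ℝ) :
    (c • B).charpoly =
      (((Finset.univ.val.map hB.eigenvalues).map (fun r => c * r)).map (fun a => X - C a)).prod := by
  have hU1 : (hB.eigenvectorUnitary : Matrix n n ℝ) * star (hB.eigenvectorUnitary : Matrix n n ℝ) = 1 :=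
    Matrix.mem_unitaryGroup_iff.mp hB.eigenvectorUnitary.2
  have hsp := hB.spectral_theorem
  have hd : (Matrix.diagonal (RCLike.ofReal ∘ hB.eigenvalues) : Matrix n n ℝ)
      = Matrix.diagonal hB.eigenvalues := by
    congr 1
  have hB2 : c • B = (hB.eigenvectorUnitary : Matrix n n ℝ) *
      Matrix.diagonal (fun i => c * hB.eigenvalues i) * star (hB.eigenvectorUnitary : Matrix n n ℝ) := by
    have hdi : (Matrix.diagonal (fun i => c * hB.eigenvalues i) : Matrix n n ℝ)
        = c • Matrix.diagonal hB.eigenvalues := by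
      rw [← Matrix.diagonal_smul]
      congr 1
    rw [hdi, mul_smul_comm, smul_mul_assoc]
    conv_lhs => rw [hsp, hd]
    rfl
  rw [hB2, my_charpoly_conj _ _ _ hU1, my_charpoly_diagonal]
  rw [Finset.prod_eq_multiset_prod]
  simp [Multiset.map_map, Function.comp]

lemma roots_charpoly_smul (B : Matrix n n ℝ) (hB : B.IsHermitian) (c : ℝ) :
    (c • B).charpoly.roots = (Finset.univ.val.map hB.eigenvalues).map (fun r => c * r) := by
  rw [charpoly_smul_hermitian B hB c, roots_multiset_prod_X_sub_C]

end GenericCharpoly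

section Triangle

noncomputable def Pm : Matrix (Fin 3) (Fin 3) ℝ := !![1,1,1;1,-1,0;1,0,-1]
noncomputable def Qm : Matrix (Fin 3) (Fin 3) ℝ :=
  !![1/3,1/3,1/3; 1/3,-2/3,1/3; 1/3,1/3,-2/3]
noncomputable def Dm : Matrix (Fin 3) (Fin 3) ℝ := Matrix.diagonal ![2,-1,-1]
noncomputable def Mk3 : Matrix (Fin 3) (Fin 3) ℝ := !![0,1,1;1,0,1;1,1,0]

lemma QP : Qm * Pm = 1 := by
  ext i j
  fin_cases i <;> fin_cases j <;>
    simp [Qm, Pm, Matrix.mul_apply, Fin.sum_univ_three, Matrix.one_apply] <;> norm_num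

lemma QMP : Qm * Mk3 * Pm = Dm := by
  ext i j
  fin_cases i <;> fin_cases j <;>
    simp [Qm, Pm, Mk3, Dm, Matrix.mul_apply, Fin.sum_univ_three, Matrix.diagonal] <;> norm_num

lemma charpolyMk3 : Mk3.charpoly = (X - C 2) * (X + C 1) ^ 2 := by
  rw [Matrix.charpoly, Matrix.det_fin_three]
  simp [charmatrix_apply, Mk3, Matrix.diagonal, Matrix.vecHead, Matrix.vecTail, map_ofNat]
  ring

lemma rootsMk3 : Mk3.charpoly.roots = {2, -1, -1} := by
  rw [charpolyMk3]
  have h1 : (X - C (2:ℝ)) ≠ 0 := X_sub_C_ne_zero 2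
  have h2 : ((X + C (1:ℝ)) ^ 2) ≠ 0 := pow_ne_zero _ (by
    have := X_sub_C_ne_zero (-1:ℝ); rwa [map_neg, sub_neg_eq_add] at this)
  rw [roots_mul (mul_ne_zero h1 h2), roots_X_sub_C, roots_pow]
  have : (X + C (1:ℝ)) = X - C (-1) := by rw [map_neg, sub_neg_eq_add]
  rw [this, roots_X_sub_C]
  rfl

variable {V : Type*} [Fintype V] [DecidableEq V]

lemma charpoly_kron (B : Matrix V V ℝ) :
    (Mk3 ⊗ₖ B).charpoly =
      ((2:ℝ) • B).charpoly * (((-1:ℝ) • B).charpoly * ((-1:ℝ) • B).charpoly) := by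
  have h1 : (Qm ⊗ₖ (1 : Matrix V V ℝ)) * (Pm ⊗ₖ 1) = 1 := by
    rw [← Matrix.mul_kronecker_mul, QP, Matrix.one_mul, Matrix.one_kronecker_one]
  have h2 : (Qm ⊗ₖ (1 : Matrix V V ℝ)) * (Mk3 ⊗ₖ B) * (Pm ⊗ₖ 1) = Dm ⊗ₖ B := by
    rw [← Matrix.mul_kronecker_mul, ← Matrix.mul_kronecker_mul, Matrix.one_mul, Matrix.mul_one,
      QMP]
  have h3 : (Mk3 ⊗ₖ B).charpoly = (Dm ⊗ₖ B).charpoly := by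
    rw [← h2, my_charpoly_conj _ _ _ h1]
  have h4 : Matrix.reindex (Equiv.prodComm (Fin 3) V) (Equiv.prodComm (Fin 3) V) (Dm ⊗ₖ B)
      = Matrix.blockDiagonal (fun i => (![2,-1,-1] i : ℝ) • B) := by
    ext ⟨a, i⟩ ⟨b, j⟩
    by_cases hij : i = j
    · subst hij
      simp [Dm, Matrix.blockDiagonal_apply, Matrix.kroneckerMap_apply]
    · simp [Dm, Matrix.blockDiagonal_apply, Matrix.kroneckerMap_apply,
        Matrix.diagonal_apply_ne _ hij, hij]
  have h5 := Matrix.charpoly_reindex (Equiv.prodComm (Fin 3) V) (Dm ⊗ₖ B)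
  rw [h3, ← h5, h4, my_charpoly_blockDiagonal, Fin.prod_univ_three]
  rw [show (![2,-1,-1] 2 : ℝ) = -1 from rfl]
  norm_num [mul_assoc]

end Triangle

lemma fareyCharpoly_eq (n : ℕ) (hn : n ≠ 0) [I1 : Fintype (FareyVertex n)]
    [I2 : DecidableEq (FareyVertex n)] [I3 : DecidableRel (FareyGraph n).Adj] :
    fareyCharpoly n = Matrix.charpoly ((FareyGraph n).adjMatrix ℝ) := by
  rw [fareyCharpoly, dif_neg hn]
  congr!


open Polynomial Matrix

/-! ### Generic vertex lemmas -/

lemma zmod2_neg (x : ZMod 2) : -x = x := by revert x; decide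

lemma mk_eq_mk {n : ℕ} {a c b d : ZMod n} {h : IsCoprime a c} {h' : IsCoprime b d} :
    FareyVertex.mk n a c h = FareyVertex.mk n b d h' ↔
      (a = b ∧ c = d) ∨ (a = -b ∧ c = -d) := by
  constructor
  · intro he
    have hr := Quotient.exact he
    rcases hr with h1 | h1
    · left
      exact ⟨congrArg Prod.fst h1, congrArg Prod.snd h1⟩
    · right
      have h1 : ((a, c) : ZMod n × ZMod n) = (-b, -d) := h1
      exact ⟨congrArg Prod.fst h1, congrArg Prod.snd h1⟩
  · rintro (⟨rfl, rfl⟩ | ⟨rfl, rfl⟩)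
    · rfl
    · exact Quotient.sound (Or.inr rfl)

lemma adj_mk_iff {n : ℕ} {a c b d : ZMod n} {h : IsCoprime a c} {h' : IsCoprime b d} :
    (FareyGraph n).Adj (FareyVertex.mk n a c h) (FareyVertex.mk n b d h') ↔
      FareyVertex.mk n a c h ≠ FareyVertex.mk n b d h' ∧
        (a * d - b * c = 1 ∨ a * d - b * c = -1) := by
  constructor
  · rintro ⟨hne, a', c', b', d', ⟨ha', hu⟩, ⟨hb', hv⟩, hdet⟩
    refine ⟨hne, ?_⟩
    rw [mk_eq_mk] at hu hv
    rcases hu with ⟨h1, h2⟩ | ⟨h1, h2⟩ <;> rcases hv with ⟨h3, h4⟩ | ⟨h3, h4⟩ <;>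
      rcases hdet with h5 | h5 <;> subst h1 <;> subst h2 <;> subst h3 <;> subst h4 <;>
      first
        | exact Or.inl (by linear_combination h5)
        | exact Or.inr (by linear_combination h5)
        | exact Or.inl (by linear_combination -h5)
        | exact Or.inr (by linear_combination -h5)
  · rintro ⟨hne, hdet⟩
    exact ⟨hne, a, c, b, d, ⟨h, rfl⟩, ⟨h', rfl⟩, hdet⟩

/-! ### The CRT equivalence -/

section CRT

variable {m : ℕ} (hc : Nat.Coprime 2 m)

noncomputable def phi2m : ZMod (2 * m) ≃+* ZMod 2 × ZMod m := ZMod.chineseRemainder hc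

/-- first-component ring hom -/
noncomputable def f2 : ZMod (2 * m) →+* ZMod 2 :=
  (RingHom.fst (ZMod 2) (ZMod m)).comp ((phi2m hc : ZMod (2*m) ≃+* ZMod 2 × ZMod m) :
    ZMod (2*m) →+* ZMod 2 × ZMod m)

noncomputable def fm : ZMod (2 * m) →+* ZMod m :=
  (RingHom.snd (ZMod 2) (ZMod m)).comp ((phi2m hc : ZMod (2*m) ≃+* ZMod 2 × ZMod m) :
    ZMod (2*m) →+* ZMod 2 × ZMod m)

lemma f2_apply (x : ZMod (2*m)) : f2 hc x = (phi2m hc x).1 := rfl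
lemma fm_apply (x : ZMod (2*m)) : fm hc x = (phi2m hc x).2 := rfl

noncomputable def eAux (p : {p : ZMod (2*m) × ZMod (2*m) // IsCoprime p.1 p.2}) :
    FareyVertex 2 × FareyVertex m :=
  (FareyVertex.mk 2 (phi2m hc p.1.1).1 (phi2m hc p.1.2).1 (by
      have := p.2.map (f2 hc); rwa [f2_apply, f2_apply] at this),
   FareyVertex.mk m (phi2m hc p.1.1).2 (phi2m hc p.1.2).2 (by
      have := p.2.map (fm hc); rwa [fm_apply, fm_apply] at this))

noncomputable def eFun : FareyVertex (2*m) → FareyVertex 2 × FareyVertex m :=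
  Quotient.lift (eAux hc) (by
    rintro ⟨⟨a, c⟩, hp⟩ ⟨⟨b, d⟩, hq⟩ (hr | hr)
    · obtain ⟨h1, h2⟩ : a = b ∧ c = d := ⟨congrArg Prod.fst hr, congrArg Prod.snd hr⟩
      subst h1; subst h2; rfl
    · obtain ⟨h1, h2⟩ : a = -b ∧ c = -d :=
        ⟨congrArg Prod.fst hr, congrArg Prod.snd hr⟩
      subst h1; subst h2
      unfold eAux
      simp only [map_neg]
      refine Prod.ext ?_ ?_
      · exact mk_eq_mk.mpr (Or.inr ⟨rfl, rfl⟩)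
      · exact mk_eq_mk.mpr (Or.inr ⟨rfl, rfl⟩))

lemma eFun_mk (a c : ZMod (2*m)) (h : IsCoprime a c) :
    eFun hc (FareyVertex.mk (2*m) a c h) =
      (FareyVertex.mk 2 (phi2m hc a).1 (phi2m hc c).1 (by
          have := h.map (f2 hc); rwa [f2_apply, f2_apply] at this),
       FareyVertex.mk m (phi2m hc a).2 (phi2m hc c).2 (by
          have := h.map (fm hc); rwa [fm_apply, fm_apply] at this)) := rfl

lemma cop_glue {a2 c2 : ZMod 2} {am cm : ZMod m} (h2 : IsCoprime a2 c2)
    (hm : IsCoprime am cm) :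
    IsCoprime ((phi2m hc).symm (a2, am)) ((phi2m hc).symm (c2, cm)) := by
  obtain ⟨x2, y2, e2⟩ := h2
  obtain ⟨xm, ym, em⟩ := hm
  refine ⟨(phi2m hc).symm (x2, xm), (phi2m hc).symm (y2, ym), ?_⟩
  rw [← _root_.map_mul, ← _root_.map_mul, ← map_add]
  have : ((x2, xm) * (a2, am) + (y2, ym) * (c2, cm) : ZMod 2 × ZMod m) = 1 := by
    rw [Prod.mk_mul_mk, Prod.mk_mul_mk, Prod.mk_add_mk, Prod.ext_iff]
    exact ⟨e2, em⟩
  rw [this, _root_.map_one]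

noncomputable def symFun : FareyVertex 2 → FareyVertex m → FareyVertex (2*m) :=
  Quotient.lift₂
    (fun p q => FareyVertex.mk (2*m) ((phi2m hc).symm (p.1.1, q.1.1))
      ((phi2m hc).symm (p.1.2, q.1.2)) (cop_glue hc p.2 q.2))
    (by
      rintro ⟨⟨a2, c2⟩, hp⟩ ⟨⟨am, cm⟩, hq⟩ ⟨⟨b2, d2⟩, hp'⟩ ⟨⟨bm, dm⟩, hq'⟩ hr2 hrm
      have h2 : a2 = b2 ∧ c2 = d2 := by
        rcases hr2 with hr | hr
        · exact ⟨congrArg Prod.fst hr, congrArg Prod.snd hr⟩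
        · refine ⟨?_, ?_⟩
          · have := congrArg Prod.fst hr; rw [show ((-(b2, d2) : ZMod 2 × ZMod 2)).1 = -b2 from rfl,
              zmod2_neg] at this; exact this
          · have := congrArg Prod.snd hr; rw [show ((-(b2, d2) : ZMod 2 × ZMod 2)).2 = -d2 from rfl,
              zmod2_neg] at this; exact this
      obtain ⟨rfl, rfl⟩ := h2
      rcases hrm with hr | hr
      · obtain ⟨rfl, rfl⟩ : am = bm ∧ cm = dm := ⟨congrArg Prod.fst hr, congrArg Prod.snd hr⟩
        rfl
      · obtain ⟨rfl, rfl⟩ : am = -bm ∧ cm = -dm := ⟨congrArg Prod.fst hr, congrArg Prod.snd hr⟩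
        apply mk_eq_mk.mpr
        right
        constructor
        · rw [← map_neg]; congr 1; rw [Prod.neg_mk, zmod2_neg]
        · rw [← map_neg]; congr 1; rw [Prod.neg_mk, zmod2_neg])

lemma symFun_mk (a2 c2 : ZMod 2) (am cm : ZMod m) (h2 : IsCoprime a2 c2)
    (hm : IsCoprime am cm) :
    symFun hc (FareyVertex.mk 2 a2 c2 h2) (FareyVertex.mk m am cm hm) =
      FareyVertex.mk (2*m) ((phi2m hc).symm (a2, am)) ((phi2m hc).symm (c2, cm))
        (cop_glue hc h2 hm) := rfl

noncomputable def eEquiv : FareyVertex (2*m) ≃ FareyVertex 2 × FareyVertex m where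
  toFun := eFun hc
  invFun uv := symFun hc uv.1 uv.2
  left_inv := by
    refine Quotient.ind ?_
    rintro ⟨⟨a, c⟩, hp⟩
    show symFun hc (eFun hc (FareyVertex.mk (2*m) a c hp)).1
        (eFun hc (FareyVertex.mk (2*m) a c hp)).2 = FareyVertex.mk (2*m) a c hp
    rw [eFun_mk, symFun_mk]
    apply mk_eq_mk.mpr
    left
    constructor
    · rw [show ((phi2m hc a).1, (phi2m hc a).2) = phi2m hc a from rfl,
        RingEquiv.symm_apply_apply]
    · rw [show ((phi2m hc c).1, (phi2m hc c).2) = phi2m hc c from rfl,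
        RingEquiv.symm_apply_apply]
  right_inv := by
    rintro ⟨u, v⟩
    induction u using Quotient.ind with
    | _ p =>
    induction v using Quotient.ind with
    | _ q =>
    obtain ⟨⟨a2, c2⟩, hp⟩ := p
    obtain ⟨⟨am, cm⟩, hq⟩ := q
    show eFun hc (symFun hc (FareyVertex.mk 2 a2 c2 hp) (FareyVertex.mk m am cm hq)) = _
    rw [symFun_mk, eFun_mk]
    refine Prod.ext ?_ ?_
    · exact mk_eq_mk.mpr (Or.inl ⟨congrArg Prod.fst ((phi2m hc).apply_symm_apply (a2, am)),
        congrArg Prod.fst ((phi2m hc).apply_symm_apply (c2, cm))⟩)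
    · exact mk_eq_mk.mpr (Or.inl ⟨congrArg Prod.snd ((phi2m hc).apply_symm_apply (a2, am)),
        congrArg Prod.snd ((phi2m hc).apply_symm_apply (c2, cm))⟩)

end CRT

section Adj

variable {m : ℕ} (hc : Nat.Coprime 2 m)

lemma adj_iff_mk (hm3 : 3 ≤ m) {a c b d : ZMod (2*m)} (hp : IsCoprime a c)
    (hq : IsCoprime b d) (e1 : IsCoprime (f2 hc a) (f2 hc c))
    (e2 : IsCoprime (f2 hc b) (f2 hc d)) (e3 : IsCoprime (fm hc a) (fm hc c))
    (e4 : IsCoprime (fm hc b) (fm hc d)) :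
    (FareyGraph (2*m)).Adj (FareyVertex.mk (2*m) a c hp) (FareyVertex.mk (2*m) b d hq) ↔
      (FareyGraph 2).Adj (FareyVertex.mk 2 (f2 hc a) (f2 hc c) e1)
          (FareyVertex.mk 2 (f2 hc b) (f2 hc d) e2) ∧
        (FareyGraph m).Adj (FareyVertex.mk m (fm hc a) (fm hc c) e3)
          (FareyVertex.mk m (fm hc b) (fm hc d) e4) := by
  haveI : Fact (1 < m) := ⟨by omega⟩
  have hf2 : f2 hc (a * d - b * c) = f2 hc a * f2 hc d - f2 hc b * f2 hc c := by
    rw [map_sub, _root_.map_mul, _root_.map_mul]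
  have hfm : fm hc (a * d - b * c) = fm hc a * fm hc d - fm hc b * fm hc c := by
    rw [map_sub, _root_.map_mul, _root_.map_mul]
  rw [adj_mk_iff, adj_mk_iff, adj_mk_iff]
  constructor
  · rintro ⟨hne, hdet⟩
    have hdet2 : f2 hc a * f2 hc d - f2 hc b * f2 hc c = 1 ∨
        f2 hc a * f2 hc d - f2 hc b * f2 hc c = -1 := by
      rcases hdet with h | h
      · left; rw [← hf2, h, _root_.map_one]
      · right; rw [← hf2, h, map_neg, _root_.map_one]
    have hdetm : fm hc a * fm hc d - fm hc b * fm hc c = 1 ∨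
        fm hc a * fm hc d - fm hc b * fm hc c = -1 := by
      rcases hdet with h | h
      · left; rw [← hfm, h, _root_.map_one]
      · right; rw [← hfm, h, map_neg, _root_.map_one]
    refine ⟨⟨?_, hdet2⟩, ⟨?_, hdetm⟩⟩
    · intro heq
      have hz : f2 hc a * f2 hc d - f2 hc b * f2 hc c = 0 := by
        rcases mk_eq_mk.mp heq with ⟨g1, g2⟩ | ⟨g1, g2⟩
        · rw [g1, g2]; ring
        · rw [zmod2_neg] at g1 g2; rw [g1, g2]; ring
      rcases hdet2 with h | h <;> rw [hz] at h <;> exact absurd h (by decide)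
    · intro heq
      have hz : fm hc a * fm hc d - fm hc b * fm hc c = 0 := by
        rcases mk_eq_mk.mp heq with ⟨g1, g2⟩ | ⟨g1, g2⟩
        · rw [g1, g2]; ring
        · rw [g1, g2]; ring
      rcases hdetm with h | h <;> rw [hz] at h
      · exact one_ne_zero h.symm
      · exact one_ne_zero (by linear_combination h : (1 : ZMod m) = 0)
  · rintro ⟨⟨hne2, hdet2⟩, ⟨hnem, hdetm⟩⟩
    have hdet2' : f2 hc (a * d - b * c) = 1 := by
      rw [hf2]
      rcases hdet2 with h | h
      · exact h
      · rw [h]; decide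
    constructor
    · intro heq
      apply hnem
      rcases mk_eq_mk.mp heq with ⟨g1, g2⟩ | ⟨g1, g2⟩
      · exact mk_eq_mk.mpr (Or.inl ⟨by rw [g1], by rw [g2]⟩)
      · exact mk_eq_mk.mpr (Or.inr ⟨by rw [g1, map_neg], by rw [g2, map_neg]⟩)
    · rcases hdetm with h | h
      · left
        apply (phi2m hc).injective
        rw [_root_.map_one]
        refine Prod.ext ?_ ?_
        · exact hdet2'
        · show fm hc (a * d - b * c) = 1
          rw [hfm, h]
      · right
        apply (phi2m hc).injective
        have hneg : phi2m hc (-1 : ZMod (2*m)) = ((1 : ZMod 2), (-1 : ZMod m)) := by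
          rw [map_neg, _root_.map_one]
          refine Prod.ext ?_ ?_
          · show -(1 : ZMod 2) = 1; decide
          · rfl
        rw [hneg]
        refine Prod.ext ?_ ?_
        · exact hdet2'
        · show fm hc (a * d - b * c) = -1
          rw [hfm, h]

end Adj

/-! ### `G3(2)` is the triangle -/

def g3 : Fin 3 → FareyVertex 2 :=
  ![FareyVertex.mk 2 0 1 (isCoprime_zero_left.mpr isUnit_one),
    FareyVertex.mk 2 1 0 isCoprime_one_left,
    FareyVertex.mk 2 1 1 isCoprime_one_left]

lemma g3_bij : Function.Bijective g3 := by
  constructor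
  · intro i j hij
    fin_cases i <;> fin_cases j <;>
      simp only [g3, Matrix.cons_val_zero, Matrix.cons_val_one, Matrix.head_cons,
        Matrix.cons_val_two, Matrix.tail_cons] at hij <;>
      first
        | rfl
        | exact absurd (mk_eq_mk.mp hij) (by decide)
  · refine Quotient.ind ?_
    rintro ⟨⟨a, c⟩, h⟩
    fin_cases a <;> fin_cases c
    · exact absurd (isCoprime_zero_left.mp h) (fun hu => absurd (isUnit_zero_iff.mp hu) (by decide))
    · exact ⟨0, (mk_eq_mk.mpr (Or.inl ⟨rfl, rfl⟩))⟩
    · exact ⟨1, (mk_eq_mk.mpr (Or.inl ⟨rfl, rfl⟩))⟩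
    · exact ⟨2, (mk_eq_mk.mpr (Or.inl ⟨rfl, rfl⟩))⟩

noncomputable def f3 : FareyVertex 2 ≃ Fin 3 := (Equiv.ofBijective g3 g3_bij).symm

lemma adj_g3 : ∀ i j : Fin 3, i ≠ j → (FareyGraph 2).Adj (g3 i) (g3 j) := by
  intro i j hij
  fin_cases i <;> fin_cases j <;> simp only [g3, Matrix.cons_val_zero, Matrix.cons_val_one,
    Matrix.head_cons, Matrix.cons_val_two, Matrix.tail_cons] <;>
    first
      | exact absurd rfl hij
      | exact adj_mk_iff.mpr ⟨fun he => absurd (mk_eq_mk.mp he) (by decide), by decide⟩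

lemma reindex_adj2 [Fintype (FareyVertex 2)] [DecidableEq (FareyVertex 2)]
    [DecidableRel (FareyGraph 2).Adj] :
    Matrix.reindex f3 f3 ((FareyGraph 2).adjMatrix ℝ) = Mk3 := by
  ext i j
  have hsymm : ∀ k, f3.symm k = g3 k := fun k => rfl
  rw [Matrix.reindex_apply, Matrix.submatrix_apply, hsymm, hsymm,
    SimpleGraph.adjMatrix_apply]
  by_cases hij : i = j
  · subst hij
    rw [if_neg (SimpleGraph.irrefl _)]
    fin_cases i <;> norm_num [Mk3]
  · rw [if_pos (adj_g3 i j hij)]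
    fin_cases i <;> fin_cases j <;> first | (exact absurd rfl hij) | norm_num [Mk3]


section Assembly

variable {m : ℕ} (hc : Nat.Coprime 2 m)

lemma adj_iff (hm3 : 3 ≤ m) (u v : FareyVertex (2*m)) :
    (FareyGraph (2*m)).Adj u v ↔
      (FareyGraph 2).Adj (eEquiv hc u).1 (eEquiv hc v).1 ∧
        (FareyGraph m).Adj (eEquiv hc u).2 (eEquiv hc v).2 := by
  induction u using Quotient.ind with
  | _ p =>
  induction v using Quotient.ind with
  | _ q =>
  obtain ⟨⟨a, c⟩, hp⟩ := p
  obtain ⟨⟨b, d⟩, hq⟩ := q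
  exact adj_iff_mk hc hm3 hp hq (hp.map (f2 hc)) (hq.map (f2 hc)) (hp.map (fm hc))
    (hq.map (fm hc))

lemma reindex_adj2m (hm3 : 3 ≤ m)
    [Fintype (FareyVertex (2*m))] [DecidableEq (FareyVertex (2*m))]
    [DecidableRel (FareyGraph (2*m)).Adj]
    [Fintype (FareyVertex 2)] [DecidableEq (FareyVertex 2)] [DecidableRel (FareyGraph 2).Adj]
    [Fintype (FareyVertex m)] [DecidableEq (FareyVertex m)] [DecidableRel (FareyGraph m).Adj] :
    Matrix.reindex (eEquiv hc) (eEquiv hc) ((FareyGraph (2*m)).adjMatrix ℝ)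
      = ((FareyGraph 2).adjMatrix ℝ) ⊗ₖ ((FareyGraph m).adjMatrix ℝ) := by
  ext ⟨u1, u2⟩ ⟨v1, v2⟩
  rw [Matrix.reindex_apply, Matrix.submatrix_apply, Matrix.kroneckerMap_apply]
  have hiff := adj_iff hc hm3 ((eEquiv hc).symm (u1, u2)) ((eEquiv hc).symm (v1, v2))
  rw [Equiv.apply_symm_apply, Equiv.apply_symm_apply] at hiff
  rw [SimpleGraph.adjMatrix_apply, SimpleGraph.adjMatrix_apply, SimpleGraph.adjMatrix_apply]
  by_cases h1 : (FareyGraph 2).Adj u1 v1 <;> by_cases h2 : (FareyGraph m).Adj u2 v2 <;>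
    simp [hiff, h1, h2]

end Assembly

/-- For odd `m ≥ 3`, the spectrum of `G3(2m)` is the product multiset
`sp3(2)·sp3(m) = {λ·μ : λ ∈ sp3(2), μ ∈ sp3(m)}` counted with multiplicity. -/
theorem stmt12 (m : ℕ) (hm : 3 ≤ m) (hodd : Odd m) :
    sp3 (2 * m) = (sp3 2).bind (fun lam => (sp3 m).map (fun mu => lam * mu)) := by
  have hm0 : m ≠ 0 := by omega
  have hc : Nat.Coprime 2 m := (Nat.prime_two.coprime_iff_not_dvd).mpr (by
    obtain ⟨k, hk⟩ := hodd; omega)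
  haveI : NeZero m := ⟨hm0⟩
  haveI : NeZero (2 * m) := ⟨by omega⟩
  letI : Fintype (FareyVertex (2*m)) := Fintype.ofFinite _
  letI : DecidableEq (FareyVertex (2*m)) := Classical.decEq _
  letI : DecidableRel (FareyGraph (2*m)).Adj := Classical.decRel _
  letI : Fintype (FareyVertex 2) := Fintype.ofFinite _
  letI : DecidableEq (FareyVertex 2) := Classical.decEq _
  letI : DecidableRel (FareyGraph 2).Adj := Classical.decRel _
  letI : Fintype (FareyVertex m) := Fintype.ofFinite _
  letI : DecidableEq (FareyVertex m) := Classical.decEq _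
  letI : DecidableRel (FareyGraph m).Adj := Classical.decRel _
  set B : Matrix (FareyVertex m) (FareyVertex m) ℝ := (FareyGraph m).adjMatrix ℝ with hBdef
  have hB : B.IsHermitian := by
    ext i j
    rw [hBdef, Matrix.conjTranspose_apply, star_trivial, SimpleGraph.adjMatrix_apply,
      SimpleGraph.adjMatrix_apply]
    congr 1
    exact propext (SimpleGraph.adj_comm _ _ _)
  set S : Multiset ℝ := Finset.univ.val.map hB.eigenvalues with hSdef
  -- the spectrum of `G3(m)`
  have hspm : sp3 m = S := by
    rw [sp3, fareyCharpoly_eq m hm0, show ((FareyGraph m).adjMatrix ℝ) = (1:ℝ) • B by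
      rw [one_smul], roots_charpoly_smul B hB 1]
    simp
    rfl
  -- the spectrum of `G3(2)`
  have hsp2 : sp3 2 = {2, -1, -1} := by
    rw [sp3, fareyCharpoly_eq 2 (by norm_num), ← Matrix.charpoly_reindex f3, reindex_adj2,
      rootsMk3]
  -- the spectrum of `G3(2m)`
  have hchar : fareyCharpoly (2*m) = (Mk3 ⊗ₖ B).charpoly := by
    rw [fareyCharpoly_eq (2*m) (by omega),
      ← Matrix.charpoly_reindex (eEquiv hc) ((FareyGraph (2*m)).adjMatrix ℝ),
      reindex_adj2m hc hm,
      ← Matrix.charpoly_reindex (Equiv.prodCongr f3 (Equiv.refl (FareyVertex m))),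
      ← Matrix.kroneckerMap_reindex, reindex_adj2, Matrix.reindex_refl_refl]
  have hsp2m : sp3 (2*m) = S.map (fun r => (2:ℝ) * r) +
      (S.map (fun r => (-1:ℝ) * r) + S.map (fun r => (-1:ℝ) * r)) := by
    rw [sp3, hchar, charpoly_kron]
    rw [Polynomial.roots_mul (mul_ne_zero (((2:ℝ) • B).charpoly_monic.ne_zero)
      (mul_ne_zero (((-1:ℝ) • B).charpoly_monic.ne_zero)
        (((-1:ℝ) • B).charpoly_monic.ne_zero))),
      Polynomial.roots_mul (mul_ne_zero (((-1:ℝ) • B).charpoly_monic.ne_zero)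
        (((-1:ℝ) • B).charpoly_monic.ne_zero)),
      roots_charpoly_smul B hB 2, roots_charpoly_smul B hB (-1)]
  rw [hsp2m, hsp2, hspm]
  show _ = Multiset.bind (2 ::ₘ -1 ::ₘ {-1}) _
  rw [Multiset.cons_bind, Multiset.cons_bind, Multiset.singleton_bind]
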